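/- arXiv:quant-ph/0702229 — 9 statements merged into one kernel-verified Lean document; each statement's English description precedes it below -/
import Mathlib

section
/- Let G be a graph whose vertex set is covered by k vertex-disjoint directed paths P₁, …, P_k, and suppose the associated influencing digraph D(G, P₁, …, P_k) is acyclic. Then for any path Pᵢ = v₁ → v₂ → ⋯ → v_{nᵢ} and any indices a < b, the edge v_a v_b belongs to E(G) if and only if b = a + 1. -/
/-- If `G` is covered by `k` vertex-disjoint directed paths and the influencing
digraph `D(G, P₁, …, P_k)` is acyclic, then within any one path only
consecutive vertices are adjacent in `G`. -/
theorem acyclic_implies_path_induced {V : Type*} [Fintype V]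
    (G : SimpleGraph V) (k : ℕ) (n : Fin k → ℕ) (P : Fin k → ℕ → V)
    (hcov : ∀ v : V, ∃ i a, a < n i ∧ P i a = v)
    (hdisj : ∀ i a j b, a < n i → b < n j → P i a = P j b → i = j ∧ a = b)
    (hpath : ∀ i a, a + 1 < n i → G.Adj (P i a) (P i (a + 1)))
    (hacyc : ∀ x : V, ¬ Relation.TransGen
      (fun x y => ∃ i a, a + 1 < n i ∧ x = P i a ∧
        (y = P i (a + 1) ∨ (G.Adj y (P i (a + 1)) ∧ y ≠ x))) x x) :
    ∀ i a b, a < b → b < n i → (G.Adj (P i a) (P i b) ↔ b = a + 1) := by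
  set R : V → V → Prop := fun x y => ∃ i a, a + 1 < n i ∧ x = P i a ∧
      (y = P i (a + 1) ∨ (G.Adj y (P i (a + 1)) ∧ y ≠ x)) with hR
  intro i a b hab hbn
  constructor
  · intro hadj
    by_contra hne
    have hb2 : a + 1 < b := by omega
    -- chain along the path
    have chain : ∀ c, a < c → c < n i → Relation.TransGen R (P i a) (P i c) := by
      intro c
      induction c with
      | zero => omega
      | succ c ih =>
        intro hac hcn
        have hstep : R (P i c) (P i (c + 1)) :=
          ⟨i, c, hcn, rfl, Or.inl rfl⟩
        rcases Nat.lt_or_ge a c with h | h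
        · exact (ih h (by omega)).tail hstep
        · have : a = c := by omega
          subst this
          exact Relation.TransGen.single hstep
    have h1 := chain (b - 1) (by omega) (by omega)
    have hbb : b - 1 + 1 = b := by omega
    have hne' : P i a ≠ P i (b - 1) := by
      intro h
      have := (hdisj i a i (b - 1) (by omega) (by omega) h).2
      omega
    have hstep : R (P i (b - 1)) (P i a) := by
      refine ⟨i, b - 1, by omega, rfl, Or.inr ⟨?_, hne'⟩⟩
      rw [hbb]; exact hadj
    exact hacyc (P i a) (h1.tail hstep)
  · intro h
    subst h
    exact hpath i a hbn
end

section
/- Let G be a graph whose vertex set is covered by k vertex-disjoint directed paths P₁, …, P_k, and suppose the associated influencing digraph D(G, P₁, …, P_k) is acyclic. Let Pᵢ = v₁ → ⋯ → v_{nᵢ} and Pⱼ = w₁ → ⋯ → w_{nⱼ} be two distinct paths. Then there do not exist edges v_a w_b ∈ E(G) and v_c w_d ∈ E(G) with a < c and b > d. -/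
/-- If `G` is covered by `k` vertex-disjoint directed paths and the influencing
digraph `D(G, P₁, …, P_k)` is acyclic, then between two distinct paths there
are no "crossing" pairs of edges `v_a w_b`, `v_c w_d` with `a < c` and `b > d`. -/
theorem acyclic_implies_no_crossing {V : Type*} [Fintype V]
    (G : SimpleGraph V) (k : ℕ) (n : Fin k → ℕ) (P : Fin k → ℕ → V)
    (hcov : ∀ v : V, ∃ i a, a < n i ∧ P i a = v)
    (hdisj : ∀ i a j b, a < n i → b < n j → P i a = P j b → i = j ∧ a = b)
    (hpath : ∀ i a, a + 1 < n i → G.Adj (P i a) (P i (a + 1)))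
    (hacyc : ∀ x : V, ¬ Relation.TransGen
      (fun x y => ∃ i a, a + 1 < n i ∧ x = P i a ∧
        (y = P i (a + 1) ∨ (G.Adj y (P i (a + 1)) ∧ y ≠ x))) x x) :
    ∀ i j, i ≠ j → ∀ a b c d, a < n i → c < n i → b < n j → d < n j →
      a < c → d < b →
      ¬ (G.Adj (P i a) (P j b) ∧ G.Adj (P i c) (P j d)) := by
  rintro i j hij a b c d ha hc hb hd hac hdb ⟨h1, h2⟩
  set R : V → V → Prop := fun x y => ∃ i a, a + 1 < n i ∧ x = P i a ∧
      (y = P i (a + 1) ∨ (G.Adj y (P i (a + 1)) ∧ y ≠ x)) with hR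
  have walk : ∀ l e f, e ≤ f → f < n l →
      Relation.ReflTransGen R (P l e) (P l f) := by
    intro l e f hef
    induction f, hef using Nat.le_induction with
    | base => intro _; exact Relation.ReflTransGen.refl
    | succ m hm ih =>
        intro hm1
        exact (ih (by omega)).tail ⟨l, m, hm1, rfl, Or.inl rfl⟩
  have step1 : R (P i (c - 1)) (P j d) := by
    refine ⟨i, c - 1, by omega, rfl, Or.inr ⟨?_, ?_⟩⟩
    · rw [show c - 1 + 1 = c from by omega]; exact h2.symm
    · intro h
      exact hij ((hdisj j d i (c - 1) hd (by omega) h).1).symm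
  have step2 : R (P j (b - 1)) (P i a) := by
    refine ⟨j, b - 1, by omega, rfl, Or.inr ⟨?_, ?_⟩⟩
    · rw [show b - 1 + 1 = b from by omega]; exact h1
    · intro h
      exact hij ((hdisj i a j (b - 1) ha (by omega) h).1)
  have t1 : Relation.TransGen R (P i a) (P j d) :=
    Relation.TransGen.tail' (walk i a (c - 1) (by omega) (by omega)) step1
  have t2 : Relation.TransGen R (P j d) (P i a) :=
    Relation.TransGen.tail' (walk j d (b - 1) (by omega) (by omega)) step2
  exact hacyc (P i a) (t1.trans t2)
end

section
/- Let G be a graph whose vertex set is covered by k vertex-disjoint directed paths P₁, …, P_k with |V(Pᵢ)| = nᵢ, and suppose D(G, P₁, …, P_k) is acyclic. Then for each pair i < j, the number of edges of G with one endpoint in Pᵢ and the other in Pⱼ is at most nᵢ + nⱼ − 1. -/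
/-- If `G` is covered by `k` vertex-disjoint directed paths and the influencing
digraph `D(G, P₁, …, P_k)` is acyclic, then for each pair of distinct paths
`Pᵢ`, `Pⱼ` the number of connecting edges between them is at most
`nᵢ + nⱼ − 1`. -/
theorem acyclic_connecting_edges_bound {V : Type*} [Fintype V]
    (G : SimpleGraph V) (k : ℕ) (n : Fin k → ℕ) (P : Fin k → ℕ → V)
    (hcov : ∀ v : V, ∃ i a, a < n i ∧ P i a = v)
    (hdisj : ∀ i a j b, a < n i → b < n j → P i a = P j b → i = j ∧ a = b)
    (hpath : ∀ i a, a + 1 < n i → G.Adj (P i a) (P i (a + 1)))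
    (hacyc : ∀ x : V, ¬ Relation.TransGen
      (fun x y => ∃ i a, a + 1 < n i ∧ x = P i a ∧
        (y = P i (a + 1) ∨ (G.Adj y (P i (a + 1)) ∧ y ≠ x))) x x) :
    ∀ i j : Fin k, i < j →
      {p : ℕ × ℕ | p.1 < n i ∧ p.2 < n j ∧
        G.Adj (P i p.1) (P j p.2)}.ncard ≤ n i + n j - 1 := by
  intro i j hij
  set step : V → V → Prop := fun x y => ∃ i a, a + 1 < n i ∧ x = P i a ∧
        (y = P i (a + 1) ∨ (G.Adj y (P i (a + 1)) ∧ y ≠ x)) with hstep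
  have hne : i ≠ j := Fin.ne_of_lt hij
  -- reachability along a path to a neighbor of a later vertex
  have reach : ∀ (l : Fin k) (m a : ℕ) (w : V), a + m + 1 < n l →
      (∀ t, t < n l → w ≠ P l t) → G.Adj w (P l (a + m + 1)) →
      Relation.TransGen step (P l a) w := by
    intro l m
    induction m with
    | zero =>
      intro a w h hw hadj
      exact Relation.TransGen.single ⟨l, a, h, rfl, Or.inr ⟨hadj, hw a (by omega)⟩⟩
    | succ m ih =>
      intro a w h hw hadj
      refine Relation.TransGen.head ⟨l, a, by omega, rfl, Or.inl rfl⟩ ?_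
      have e : a + (m + 1) + 1 = (a + 1) + m + 1 := by omega
      rw [e] at h hadj
      exact ih (a + 1) w h hw hadj
  have key : ∀ a b c d, a < n i → c < n i → b < n j → d < n j →
      G.Adj (P i a) (P j b) → G.Adj (P i c) (P j d) → a < c → b ≤ d := by
    intro a b c d ha hc hb hd hab hcd hac
    by_contra h
    push_neg at h
    have hw1 : ∀ t, t < n i → P j d ≠ P i t := fun t ht heq =>
      hne.symm (hdisj j d i t hd ht heq).1
    have hw2 : ∀ t, t < n j → P i a ≠ P j t := fun t ht heq =>
      hne (hdisj i a j t ha ht heq).1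
    have h1 : Relation.TransGen step (P i a) (P j d) := by
      refine reach i (c - a - 1) a (P j d) (by omega) hw1 ?_
      rw [show a + (c - a - 1) + 1 = c by omega]
      exact hcd.symm
    have h2 : Relation.TransGen step (P j d) (P i a) := by
      refine reach j (b - d - 1) d (P i a) (by omega) hw2 ?_
      rw [show d + (b - d - 1) + 1 = b by omega]
      exact hab
    exact hacyc _ (h1.trans h2)
  set S : Set (ℕ × ℕ) := {p : ℕ × ℕ | p.1 < n i ∧ p.2 < n j ∧
        G.Adj (P i p.1) (P j p.2)} with hS
  have hinj : Set.InjOn (fun p : ℕ × ℕ => p.1 + p.2) S := by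
    rintro ⟨a, b⟩ ⟨ha, hb, hab⟩ ⟨c, d⟩ ⟨hc, hd, hcd⟩ hsum
    simp only at hsum
    rcases lt_trichotomy a c with h | h | h
    · have := key a b c d ha hc hb hd hab hcd h
      exact absurd hsum (by omega)
    · subst h
      have : b = d := by omega
      subst this; rfl
    · have := key c d a b hc ha hd hb hcd hab h
      exact absurd hsum (by omega)
  have himg : (fun p : ℕ × ℕ => p.1 + p.2) '' S ⊆ Set.Iio (n i + n j - 1) := by
    rintro x ⟨⟨a, b⟩, ⟨ha, hb, _⟩, rfl⟩
    simp only [Set.mem_Iio]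
    omega
  calc S.ncard = ((fun p : ℕ × ℕ => p.1 + p.2) '' S).ncard :=
        (Set.ncard_image_of_injOn hinj).symm
    _ ≤ (Set.Iio (n i + n j - 1)).ncard :=
        Set.ncard_le_ncard himg (Set.finite_Iio _)
    _ = n i + n j - 1 := by
        rw [show Set.Iio (n i + n j - 1) = ↑(Finset.range (n i + n j - 1)) by
          ext x; simp, Set.ncard_coe_finset, Finset.card_range]
end

section
/- Let G be a graph on n vertices covered by k vertex-disjoint directed paths P₁, …, P_k such that D(G, P₁, …, P_k) is acyclic. Then |E(G)| ≤ kn − k(k+1)/2. -/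
/-- If `G` on `n` vertices is covered by `k` vertex-disjoint directed paths and
the influencing digraph `D(G, P₁, …, P_k)` is acyclic, then
`|E(G)| ≤ k·n − k(k+1)/2`. -/
theorem acyclic_edge_bound {V : Type*} [Fintype V]
    (G : SimpleGraph V) (k : ℕ) (n : Fin k → ℕ) (P : Fin k → ℕ → V)
    (hpos : ∀ i, 0 < n i)
    (hcov : ∀ v : V, ∃ i a, a < n i ∧ P i a = v)
    (hdisj : ∀ i a j b, a < n i → b < n j → P i a = P j b → i = j ∧ a = b)
    (hpath : ∀ i a, a + 1 < n i → G.Adj (P i a) (P i (a + 1)))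
    (hacyc : ∀ x : V, ¬ Relation.TransGen
      (fun x y => ∃ i a, a + 1 < n i ∧ x = P i a ∧
        (y = P i (a + 1) ∨ (G.Adj y (P i (a + 1)) ∧ y ≠ x))) x x) :
    G.edgeSet.ncard ≤ k * Fintype.card V - k * (k + 1) / 2 := by
  classical
  set R : V → V → Prop := fun x y => ∃ i a, a + 1 < n i ∧ x = P i a ∧
      (y = P i (a + 1) ∨ (G.Adj y (P i (a + 1)) ∧ y ≠ x)) with hRdef
  have hacyc' : ∀ x : V, ¬ Relation.TransGen R x x := by
    intro x hx
    rw [hRdef] at hx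
    exact hacyc x hx
  have hR1 : ∀ (i : Fin k) (a : ℕ), a + 1 < n i → R (P i a) (P i (a + 1)) := by
    intro i a h
    rw [hRdef]
    exact ⟨i, a, h, rfl, Or.inl rfl⟩
  have hR2 : ∀ (i : Fin k) (a : ℕ) (y : V), a + 1 < n i → G.Adj y (P i (a + 1)) →
      y ≠ P i a → R (P i a) y := by
    intro i a y h hadj hne
    rw [hRdef]
    exact ⟨i, a, h, rfl, Or.inr ⟨hadj, hne⟩⟩
  -- the rank function σ0 and an injective refinement σ
  set σ0 : V → ℕ := fun v => (Finset.univ.filter fun u => Relation.TransGen R u v).card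
    with hσ0def
  have hσ0_lt : ∀ x y, R x y → σ0 x < σ0 y := by
    intro x y h
    have hsub : (Finset.univ.filter fun u => Relation.TransGen R u x) ⊆
        (Finset.univ.filter fun u => Relation.TransGen R u y) := by
      intro u hu
      simp only [Finset.mem_filter, Finset.mem_univ, true_and] at hu ⊢
      exact hu.tail h
    have hxy : x ∈ Finset.univ.filter fun u => Relation.TransGen R u y := by
      simp only [Finset.mem_filter, Finset.mem_univ, true_and]
      exact Relation.TransGen.single h
    have hxx : x ∉ Finset.univ.filter fun u => Relation.TransGen R u x := by
      simp only [Finset.mem_filter, Finset.mem_univ, true_and]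
      exact hacyc' x
    exact Finset.card_lt_card ((Finset.ssubset_iff_of_subset hsub).mpr ⟨x, hxy, hxx⟩)
  set ι : V → ℕ := fun v => ((Fintype.equivFin V) v : ℕ) with hιdef
  have hι_lt : ∀ v, ι v < Fintype.card V := fun v => ((Fintype.equivFin V) v).isLt
  have hι_inj : Function.Injective ι := by
    intro a b h
    exact (Fintype.equivFin V).injective (Fin.ext h)
  set σ : V → ℕ := fun v => σ0 v * Fintype.card V + ι v with hσdef
  have hσ_lt0 : ∀ x y, σ0 x < σ0 y → σ x < σ y := by
    intro x y h
    have h1 := hι_lt x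
    have h2 : σ0 x * Fintype.card V + Fintype.card V ≤ σ0 y * Fintype.card V := by
      rw [← Nat.succ_mul]
      exact Nat.mul_le_mul_right _ h
    simp only [hσdef]
    omega
  have hσ_lt : ∀ x y, R x y → σ x < σ y := fun x y h => hσ_lt0 x y (hσ0_lt x y h)
  have hσ_inj : Function.Injective σ := by
    intro a b h
    rcases Nat.lt_trichotomy (σ0 a) (σ0 b) with hl | he | hl
    · exact absurd h (Nat.ne_of_lt (hσ_lt0 a b hl))
    · apply hι_inj
      simp only [hσdef, he] at h
      exact Nat.add_left_cancel h
    · exact absurd h.symm (Nat.ne_of_lt (hσ_lt0 b a hl))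
  -- paths are σ-increasing
  have hmono' : ∀ (i : Fin k) (a d : ℕ), 0 < d → a + d < n i → σ (P i a) < σ (P i (a + d)) := by
    intro i a d
    induction d with
    | zero => omega
    | succ c ih =>
      intro _ hlt
      have hstep : σ (P i (a + c)) < σ (P i (a + c + 1)) :=
        hσ_lt _ _ (hR1 i (a + c) (by omega))
      rcases Nat.eq_zero_or_pos c with h0 | hc
      · subst h0
        simpa using hstep
      · exact (ih hc (by omega)).trans hstep
  have hmono : ∀ (i : Fin k) (a b : ℕ), a < b → b < n i → σ (P i a) < σ (P i b) := by
    intro i a b hab hb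
    have := hmono' i a (b - a) (by omega) (by omega)
    rwa [Nat.add_sub_cancel' (le_of_lt hab)] at this
  have hkey : ∀ (i : Fin k) (b : ℕ) (y : V), 0 < b → b < n i → G.Adj y (P i b) →
      y ≠ P i (b - 1) → σ (P i (b - 1)) < σ y := by
    intro i b y hb hbn hadj hne
    have h1 : b - 1 + 1 = b := by omega
    exact hσ_lt _ _ (hR2 i (b - 1) y (by omega) (by rwa [h1]) hne)
  have Pinj : ∀ (i : Fin k) (a b : ℕ), a < n i → b < n i → P i a = P i b → a = b :=
    fun i a b ha hb h => (hdisj i a i b ha hb h).2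
  have hconsec : ∀ (i : Fin k) (a b : ℕ), a < n i → b < n i → G.Adj (P i a) (P i b) →
      b = a + 1 ∨ a = b + 1 := by
    intro i a b ha hb hadj
    have main : ∀ a b : ℕ, a < n i → b < n i → a < b → G.Adj (P i a) (P i b) → b = a + 1 := by
      intro a b ha hb hlt hadj
      by_contra hne'
      have h2 : a < b - 1 := by omega
      have hne2 : P i a ≠ P i (b - 1) := fun h => by
        have := Pinj i a (b - 1) ha (by omega) h
        omega
      have hk1 := hkey i b (P i a) (by omega) hb hadj hne2
      have hk2 := hmono i a (b - 1) h2 (by omega)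
      omega
    have hne : a ≠ b := by
      intro h
      subst h
      exact hadj.ne rfl
    rcases Nat.lt_or_ge a b with h | h
    · exact Or.inl (main a b ha hb h hadj)
    · exact Or.inr (main b a hb ha (by omega) hadj.symm)
  -- canonical coordinates
  have hchoice : ∀ v : V, ∃ p : Fin k × ℕ, p.2 < n p.1 ∧ P p.1 p.2 = v := by
    intro v
    obtain ⟨i, a, h1, h2⟩ := hcov v
    exact ⟨(i, a), h1, h2⟩
  set idx : V → Fin k × ℕ := fun v => (hchoice v).choose with hidxdef
  have hidx1 : ∀ v, (idx v).2 < n (idx v).1 := fun v => (hchoice v).choose_spec.1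
  have hidx2 : ∀ v, P (idx v).1 (idx v).2 = v := fun v => (hchoice v).choose_spec.2
  have hidxP : ∀ (i : Fin k) (a : ℕ), a < n i → idx (P i a) = (i, a) := by
    intro i a ha
    obtain ⟨h1, h2⟩ := hdisj (idx (P i a)).1 (idx (P i a)).2 i a (hidx1 _) ha (hidx2 _)
    exact Prod.ext h1 h2
  -- the key uniqueness lemma
  have L1 : ∀ (j : Fin k) (y : V) (b b' : ℕ), b < b' → b' < n j → G.Adj y (P j b') →
      y ≠ P j (b' - 1) → σ y < σ (P j b) → False := by
    intro j y b b' hbb hb' hadj hne hσy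
    have h1 : σ (P j (b' - 1)) < σ y := hkey j b' y (by omega) hb' hadj hne
    have h2 : σ (P j b) ≤ σ (P j (b' - 1)) := by
      rcases Nat.eq_or_lt_of_le (by omega : b ≤ b' - 1) with h | h
      · rw [h]
      · exact le_of_lt (hmono j b (b' - 1) h (by omega))
    omega
  have L2 : ∀ (j : Fin k) (y : V) (b b' : ℕ), (idx y).1 ≠ j → b < n j → b' < n j →
      G.Adj y (P j b) → G.Adj y (P j b') → σ y < σ (P j b) → σ y < σ (P j b') → b = b' := by
    intro j y b b' hyj hb hb' hadj hadj' h1 h2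
    have hney : ∀ c, c < n j → y ≠ P j c := by
      intro c hc h
      apply hyj
      rw [h, hidxP j c hc]
    rcases Nat.lt_trichotomy b b' with h | h | h
    · exact (L1 j y b b' h hb' hadj' (hney _ (by omega)) h1).elim
    · exact h
    · exact (L1 j y b' b h hb hadj (hney _ (by omega)) h2).elim
  -- vertex sets of the paths
  set S : Fin k → Finset V := fun i => (Finset.range (n i)).image (P i) with hSdef
  have hSmem : ∀ (i : Fin k) (v : V), v ∈ S i ↔ ∃ a, a < n i ∧ P i a = v := by
    intro i v
    simp only [hSdef, Finset.mem_image, Finset.mem_range]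
  have hScard : ∀ i, (S i).card = n i := by
    intro i
    rw [hSdef]
    rw [Finset.card_image_of_injOn, Finset.card_range]
    intro a ha b hb h
    simp only [Finset.coe_range, Set.mem_Iio] at ha hb
    exact Pinj i a b ha hb h
  have hSdisj : ∀ i j : Fin k, i ≠ j → Disjoint (S i) (S j) := by
    intro i j hij
    refine Finset.disjoint_left.mpr ?_
    intro v hvi hvj
    obtain ⟨a, ha, hva⟩ := (hSmem i v).mp hvi
    obtain ⟨b, hb, hvb⟩ := (hSmem j v).mp hvj
    exact hij (hdisj i a j b ha hb (by rw [hva, hvb])).1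
  have hmemS : ∀ (v : V) (i : Fin k), (idx v).1 = i → v ∈ S i := by
    intro v i h
    apply (hSmem i v).mpr
    refine ⟨(idx v).2, ?_, ?_⟩
    · rw [← h]; exact hidx1 v
    · rw [← h]; exact hidx2 v
  -- ordered adjacent pairs
  set A : Finset (V × V) := Finset.univ.filter (fun p => G.Adj p.1 p.2) with hAdef
  have hmemA : ∀ (i j : Fin k) (u v : V),
      (u, v) ∈ A.filter (fun p => ((idx p.1).1, (idx p.2).1) = (i, j)) ↔
      G.Adj u v ∧ (idx u).1 = i ∧ (idx v).1 = j := by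
    intro i j u v
    simp only [hAdef, Finset.mem_filter, Finset.mem_univ, true_and, Prod.mk.injEq]
  -- the fiber bounds
  have hfiber : ∀ c : Fin k × Fin k,
      (A.filter fun p => ((idx p.1).1, (idx p.2).1) = c).card + (if c.1 = c.2 then 2 else 1)
        ≤ n c.1 + n c.2 := by
    rintro ⟨i, j⟩
    dsimp only
    by_cases hij : i = j
    · -- diagonal: edges within a path are consecutive
      subst hij
      rw [if_pos rfl]
      have hb : (A.filter fun p => ((idx p.1).1, (idx p.2).1) = (i, i)).card ≤
          (((Finset.range (n i - 1)).image (fun m => (m, m + 1)) ∪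
            (Finset.range (n i - 1)).image (fun m => (m + 1, m)) : Finset (ℕ × ℕ))).card := by
        apply Finset.card_le_card_of_injOn (fun p => ((idx p.1).2, (idx p.2).2))
        · rintro ⟨u, v⟩ hp
          obtain ⟨hadj, hu, hv⟩ := (hmemA i i u v).mp hp
          have hueq : P i (idx u).2 = u := by rw [← hu]; exact hidx2 u
          have hveq : P i (idx v).2 = v := by rw [← hv]; exact hidx2 v
          have ha : (idx u).2 < n i := by rw [← hu]; exact hidx1 u
          have hbb : (idx v).2 < n i := by rw [← hv]; exact hidx1 v
          have hadj' : G.Adj (P i (idx u).2) (P i (idx v).2) := by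
            rw [hueq, hveq]; exact hadj
          dsimp only
          rcases hconsec i _ _ ha hbb hadj' with h | h
          · apply Finset.mem_union_left
            simp only [Finset.mem_image, Finset.mem_range]
            exact ⟨(idx u).2, by omega, by simp [h]⟩
          · apply Finset.mem_union_right
            simp only [Finset.mem_image, Finset.mem_range]
            exact ⟨(idx v).2, by omega, by simp [h]⟩
        · rintro ⟨u, v⟩ hp ⟨u', v'⟩ hp' heq
          rw [Finset.mem_coe] at hp hp'
          obtain ⟨-, hu, hv⟩ := (hmemA i i u v).mp hp
          obtain ⟨-, hu', hv'⟩ := (hmemA i i u' v').mp hp'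
          simp only [Prod.mk.injEq] at heq
          have h1 : u = u' := by
            rw [← hidx2 u, ← hidx2 u', hu, hu', heq.1]
          have h2 : v = v' := by
            rw [← hidx2 v, ← hidx2 v', hv, hv', heq.2]
          rw [h1, h2]
      have hc : (((Finset.range (n i - 1)).image (fun m => (m, m + 1)) ∪
            (Finset.range (n i - 1)).image (fun m => (m + 1, m)) : Finset (ℕ × ℕ))).card
            ≤ (n i - 1) + (n i - 1) := by
        refine le_trans (Finset.card_union_le _ _) ?_
        gcongr <;> exact le_trans Finset.card_image_le (le_of_eq (Finset.card_range _))
      have := hpos i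
      omega
    · -- off-diagonal: inject into the union minus the σ-maximum
      rw [if_neg hij]
      obtain ⟨M, hMmem, hMmax⟩ := Finset.exists_max_image (S i ∪ S j) σ
        ⟨P i 0, Finset.mem_union_left _ ((hSmem i _).mpr ⟨0, hpos i, rfl⟩)⟩
      have hb : (A.filter fun p => ((idx p.1).1, (idx p.2).1) = (i, j)).card ≤
          ((S i ∪ S j).erase M).card := by
        apply Finset.card_le_card_of_injOn (fun p => if σ p.1 < σ p.2 then p.1 else p.2)
        · rintro ⟨u, v⟩ hp
          obtain ⟨hadj, hu, hv⟩ := (hmemA i j u v).mp hp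
          have hune : u ≠ v := hadj.ne
          have huS : u ∈ S i ∪ S j := Finset.mem_union_left _ (hmemS u i hu)
          have hvS : v ∈ S i ∪ S j := Finset.mem_union_right _ (hmemS v j hv)
          dsimp only
          rw [Finset.mem_coe, Finset.mem_erase]
          by_cases h : σ u < σ v
          · rw [if_pos h]
            refine ⟨fun hM => ?_, huS⟩
            have hm2 := hMmax v hvS
            rw [hM] at h
            omega
          · rw [if_neg h]
            have hlt : σ v < σ u := by
              rcases Nat.lt_or_ge (σ v) (σ u) with h' | h'
              · exact h'
              · exact absurd (hσ_inj (Nat.le_antisymm (Nat.le_of_not_lt h) h')) hune.symm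
            refine ⟨fun hM => ?_, hvS⟩
            have hm2 := hMmax u huS
            rw [hM] at hlt
            omega
        · rintro ⟨u, v⟩ hp ⟨u', v'⟩ hp' heq
          rw [Finset.mem_coe] at hp hp'
          obtain ⟨hadj, hu, hv⟩ := (hmemA i j u v).mp hp
          obtain ⟨hadj', hu', hv'⟩ := (hmemA i j u' v').mp hp'
          have hune : u ≠ v := hadj.ne
          have hune' : u' ≠ v' := hadj'.ne
          have hveq : P j (idx v).2 = v := by rw [← hv]; exact hidx2 v
          have hveq' : P j (idx v').2 = v' := by rw [← hv']; exact hidx2 v'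
          have hueq : P i (idx u).2 = u := by rw [← hu]; exact hidx2 u
          have hueq' : P i (idx u').2 = u' := by rw [← hu']; exact hidx2 u'
          have hbv : (idx v).2 < n j := by rw [← hv]; exact hidx1 v
          have hbv' : (idx v').2 < n j := by rw [← hv']; exact hidx1 v'
          have hau : (idx u).2 < n i := by rw [← hu]; exact hidx1 u
          have hau' : (idx u').2 < n i := by rw [← hu']; exact hidx1 u'
          dsimp only at heq
          by_cases h1 : σ u < σ v <;> by_cases h2 : σ u' < σ v'
          · rw [if_pos h1, if_pos h2] at heq
            -- u = u' ; deduce v = v'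
            have hbeq : (idx v).2 = (idx v').2 := by
              apply L2 j u (idx v).2 (idx v').2 (by rw [hu]; exact hij) hbv hbv'
              · rw [hveq]; exact hadj
              · rw [heq, hveq']; exact hadj'
              · rw [hveq]; exact h1
              · rw [heq, hveq']; exact h2
            have hvv : v = v' := by rw [← hveq, ← hveq', hbeq]
            rw [heq, hvv]
          · rw [if_pos h1, if_neg h2] at heq
            -- u = v' impossible: different paths
            exact absurd (by rw [← heq, hu] : (idx v').1 = i)
              (by rw [hv']; exact fun h => hij h.symm)
          · rw [if_neg h1, if_pos h2] at heq
            exact absurd (by rw [heq, hu'] : (idx v).1 = i)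
              (by rw [hv]; exact fun h => hij h.symm)
          · rw [if_neg h1, if_neg h2] at heq
            -- v = v' ; deduce u = u'
            have hlt1 : σ v < σ u := by
              rcases Nat.lt_or_ge (σ v) (σ u) with h' | h'
              · exact h'
              · exact absurd (hσ_inj (Nat.le_antisymm (Nat.le_of_not_lt h1) h')) hune.symm
            have hlt2 : σ v' < σ u' := by
              rcases Nat.lt_or_ge (σ v') (σ u') with h' | h'
              · exact h'
              · exact absurd (hσ_inj (Nat.le_antisymm (Nat.le_of_not_lt h2) h')) hune'.symm
            have haeq : (idx u).2 = (idx u').2 := by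
              apply L2 i v (idx u).2 (idx u').2 (by rw [hv]; exact fun h => hij h.symm) hau hau'
              · rw [hueq]; exact hadj.symm
              · rw [heq, hueq']; exact hadj'.symm
              · rw [hueq]; exact hlt1
              · rw [heq, hueq']; exact hlt2
            have huu : u = u' := by rw [← hueq, ← hueq', haeq]
            rw [huu, heq]
      rw [Finset.card_erase_of_mem hMmem,
          Finset.card_union_of_disjoint (hSdisj i j hij), hScard, hScard] at hb
      have := hpos i
      omega
  -- summing up
  have hAcard : 2 * G.edgeFinset.card = A.card := by
    rw [hAdef]
    exact G.two_mul_card_edgeFinset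
  have hsum : A.card =
      ∑ c : Fin k × Fin k, (A.filter fun p => ((idx p.1).1, (idx p.2).1) = c).card :=
    Finset.card_eq_sum_card_fiberwise (fun x _ => Finset.mem_univ _)
  have hNcard : Fintype.card V = ∑ i, n i := by
    have hbij : Function.Bijective (fun x : (i : Fin k) × Fin (n i) => P x.1 x.2.1) := by
      constructor
      · rintro ⟨i, a⟩ ⟨j, b⟩ h
        obtain ⟨h1, h2⟩ := hdisj i a.1 j b.1 a.isLt b.isLt h
        subst h1
        have : a = b := Fin.ext h2
        rw [this]
      · intro v
        obtain ⟨i, a, ha, hv⟩ := hcov v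
        exact ⟨⟨i, ⟨a, ha⟩⟩, hv⟩
    rw [← Fintype.card_congr (Equiv.ofBijective _ hbij)]
    simp
  have hweight : ∑ c : Fin k × Fin k, (if c.1 = c.2 then 2 else 1) = k * (k + 1) := by
    rw [Fintype.sum_prod_type]
    have hrow : ∀ i : Fin k, (∑ j : Fin k, if i = j then 2 else 1) = k + 1 := by
      intro i
      have hsplit : ∀ j : Fin k, (if i = j then 2 else 1) = 1 + (if i = j then 1 else 0) := by
        intro j
        split <;> rfl
      simp only [hsplit]
      rw [Finset.sum_add_distrib, Finset.sum_const, Finset.card_univ, Fintype.card_fin,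
        smul_eq_mul, mul_one, Finset.sum_ite_eq]
      simp
    simp only [hrow]
    rw [Finset.sum_const, Finset.card_univ, Fintype.card_fin, smul_eq_mul]
  have htarget : ∑ c : Fin k × Fin k, (n c.1 + n c.2) = 2 * (k * Fintype.card V) := by
    rw [Fintype.sum_prod_type, hNcard]
    have hrow : ∀ i : Fin k, (∑ j : Fin k, (n i + n j)) = k * n i + ∑ j, n j := by
      intro i
      rw [Finset.sum_add_distrib, Finset.sum_const, Finset.card_univ, Fintype.card_fin,
        smul_eq_mul]
    simp only [hrow]
    rw [Finset.sum_add_distrib, ← Finset.mul_sum, Finset.sum_const, Finset.card_univ,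
      Fintype.card_fin, smul_eq_mul]
    ring
  have htotal : 2 * G.edgeFinset.card + k * (k + 1) ≤ 2 * (k * Fintype.card V) := by
    rw [hAcard, hsum, ← hweight, ← Finset.sum_add_distrib, ← htarget]
    exact Finset.sum_le_sum fun c _ => hfiber c
  have hE : G.edgeSet.ncard = G.edgeFinset.card := by
    rw [← Set.ncard_coe_finset, SimpleGraph.coe_edgeFinset]
  rw [hE]
  generalize hM : k * Fintype.card V = M2 at htotal ⊢
  generalize hB : k * (k + 1) = B at htotal ⊢
  omega
end

section
/- If a geometry (G, I, O) has a causal flow, then |E(G)| ≤ k·n − k(k+1)/2, where n = |V(G)| and k = |O|. -/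
/-- If a geometry `(G, I, O)` has a causal flow, then
`|E(G)| ≤ k·n − k(k+1)/2`, where `n = |V(G)|` and `k = |O|`. -/
theorem causal_flow_edge_bound {V : Type*} [Fintype V] (G : SimpleGraph V)
    (I O : Set V) (f : V → V) (le : V → V → Prop)
    (hrefl : ∀ x, le x x)
    (htrans : ∀ x y z, le x y → le y z → le x z)
    (hantisymm : ∀ x y, le x y → le y x → x = y)
    (hcod : ∀ x ∉ O, f x ∉ I)
    (hadj : ∀ x ∉ O, G.Adj x (f x))
    (hle : ∀ x ∉ O, le x (f x))
    (hinf : ∀ x ∉ O, ∀ y, G.Adj y (f x) → le x y) :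
    G.edgeSet.ncard ≤ O.ncard * Fintype.card V - O.ncard * (O.ncard + 1) / 2 := by
  classical
  -- Every vertex reaches `O` under iteration of `f`.
  have hits : ∀ v, ∃ m, f^[m] v ∈ O := by
    intro v
    by_contra hcon
    push_neg at hcon
    have hmono : ∀ i j, i ≤ j → le (f^[i] v) (f^[j] v) := by
      intro i j hij
      induction j, hij using Nat.le_induction with
      | base => exact hrefl _
      | succ j hj ih =>
        refine htrans _ _ _ ih ?_
        rw [Function.iterate_succ_apply']
        exact hle _ (hcon j)
    have hne : ∀ i j, i < j → f^[i] v ≠ f^[j] v := by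
      intro i j hij heq
      have h1 : le (f^[i+1] v) (f^[i] v) := by
        refine htrans _ _ _ (hmono (i+1) j hij) ?_
        rw [← heq]; exact hrefl _
      have h2 : le (f^[i] v) (f^[i+1] v) := hmono i (i+1) (Nat.le_succ _)
      have h3 : f^[i] v = f^[i+1] v := hantisymm _ _ h2 h1
      have h4 : G.Adj (f^[i] v) (f (f^[i] v)) := hadj _ (hcon i)
      rw [Function.iterate_succ_apply'] at h3
      exact h4.ne h3
    have hinj : Function.Injective (fun i : ℕ => f^[i] v) := by
      intro i j hij
      by_contra hij'
      rcases Nat.lt_or_ge i j with h | h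
      · exact hne i j h hij
      · exact hne j i (lt_of_le_of_ne h (Ne.symm hij')) hij.symm
    obtain ⟨i, j, hne', heq⟩ := Finite.exists_ne_map_eq_of_infinite (fun i : ℕ => f^[i] v)
    exact hne' (hinj heq)
  set d : V → ℕ := fun v => Nat.find (hits v) with hd
  set e : V → V := fun v => f^[d v] v with he
  have heO : ∀ v, e v ∈ O := fun v => Nat.find_spec (hits v)
  have hdmin : ∀ v i, i < d v → f^[i] v ∉ O := fun v i hi => Nat.find_min (hits v) hi
  have hd0 : ∀ v, d v = 0 ↔ v ∈ O := by
    intro v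
    constructor
    · intro h
      have := heO v
      rw [he] at this
      simp only [h, Function.iterate_zero_apply] at this
      exact this
    · intro h
      exact Nat.find_eq_zero (hits v) |>.mpr h
  -- step lemma
  have hstep : ∀ v, v ∉ O → d (f v) + 1 = d v ∧ e (f v) = e v := by
    intro v hv
    have hd0v : d v ≠ 0 := fun h => hv ((hd0 v).mp h)
    have hm : d v = (d v - 1) + 1 := by omega
    set m : ℕ := d v - 1 with hmdef
    have h1 : f^[m] (f v) ∈ O := by
      have h0 : f^[d v] v ∈ O := heO v
      rw [hm, Function.iterate_succ_apply] at h0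
      exact h0
    have h2 : d (f v) ≤ m := Nat.find_le h1
    have h3 : d (f v) = m := by
      rcases Nat.lt_or_ge (d (f v)) m with h | h
      · exfalso
        have h4 : f^[d (f v) + 1] v ∈ O := by
          rw [Function.iterate_succ_apply]
          exact heO (f v)
        exact hdmin v _ (by omega) h4
      · omega
    constructor
    · omega
    · rw [he]
      simp only [h3, hm]
      rw [← Function.iterate_succ_apply]
  -- injectivity of f off O
  have finj : ∀ u, u ∉ O → ∀ v, v ∉ O → f u = f v → u = v := by
    intro u hu v hv hf
    have h1 : G.Adj u (f v) := hf ▸ hadj u hu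
    have h2 : G.Adj v (f u) := hf ▸ hadj v hv
    exact hantisymm _ _ (hinf u hu v h2) (hinf v hv u h1)
  -- same chain, same height implies equal
  have hinj : ∀ m u v, d u = m → e u = e v → d v = d u → u = v := by
    intro m
    induction m with
    | zero =>
      intro u v hu huv hv
      have h1 : u = e u := by rw [he]; simp [hu]
      have h2 : v = e v := by rw [he]; simp [hv, hu]
      rw [h1, h2, huv]
    | succ m ih =>
      intro u v hu huv hv
      have hunO : u ∉ O := fun h => by simp [(hd0 u).mpr h] at hu
      have hvnO : v ∉ O := fun h => by rw [(hd0 v).mpr h] at hv; omega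
      obtain ⟨hdu, heu⟩ := hstep u hunO
      obtain ⟨hdv, hev⟩ := hstep v hvnO
      have : f u = f v := ih (f u) (f v) (by omega) (by rw [heu, hev, huv]) (by omega)
      exact finj u hunO v hvnO this
  -- le along iterates
  have hle_it : ∀ i u, i ≤ d u → le u (f^[i] u) := by
    intro i
    induction i with
    | zero => intro u _; exact hrefl _
    | succ i ih =>
      intro u hu
      have h1 : f^[i] u ∉ O := hdmin u i (by omega)
      refine htrans _ _ _ (ih u (by omega)) ?_
      rw [Function.iterate_succ_apply']
      exact hle _ h1
  -- iterates stay in the same chain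
  have hiter : ∀ i u, i ≤ d u → e (f^[i] u) = e u ∧ d (f^[i] u) + i = d u := by
    intro i
    induction i with
    | zero => intro u _; simp
    | succ i ih =>
      intro u hu
      have hunO : u ∉ O := by
        intro h
        rw [(hd0 u).mpr h] at hu; omega
      obtain ⟨hdu, heu⟩ := hstep u hunO
      have h2 : i ≤ d (f u) := by omega
      obtain ⟨h3, h4⟩ := ih (f u) h2
      constructor
      · rw [Function.iterate_succ_apply, h3, heu]
      · rw [Function.iterate_succ_apply]; omega
  -- reach: if same chain and d u = d v + t then f^[t] u = v
  have hreach : ∀ t u v, d u = d v + t → e u = e v → f^[t] u = v := by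
    intro t
    induction t with
    | zero => intro u v h1 h2; exact hinj (d u) u v rfl h2 (by omega)
    | succ t ih =>
      intro u v h1 h2
      have hunO : u ∉ O := by
        intro h
        rw [(hd0 u).mpr h] at h1; omega
      obtain ⟨hdu, heu⟩ := hstep u hunO
      rw [Function.iterate_succ_apply]
      exact ih (f u) v (by omega) (by rw [heu, h2])
  -- consecutive: an edge within a chain goes one step
  have hconsec : ∀ u v, G.Adj u v → e u = e v → d v < d u → f u = v := by
    intro u v hadj' heuv hduv
    set t : ℕ := d u - d v - 1 with ht
    have htle : t ≤ d u := by omega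
    set w : V := f^[t] u with hw
    obtain ⟨hew, hdw⟩ := hiter t u htle
    rw [← hw] at hew hdw
    have hwnO : w ∉ O := by
      intro h
      rw [(hd0 w).mpr h] at hdw; omega
    have hfw : f w = v := by
      have : f^[1] w = v := hreach 1 w v (by omega) (by rw [hew, heuv])
      simpa using this
    have h1 : le w u := hinf w hwnO u (by rw [hfw]; exact hadj')
    have h2 : le u w := hle_it t u htle
    have h3 : u = w := hantisymm _ _ h2 h1
    rw [h3, hfw]
  -- crossing lemma
  have hcross : ∀ u v u' v', G.Adj u v → G.Adj u' v' → e u = e u' → e v = e v' →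
      e u ≠ e v → d u < d u' → d u + d v = d u' + d v' → False := by
    intro u v u' v' ha ha' heu hev hne hlt hsum
    -- w = predecessor chain point of u' at height d u + 1, f w = u
    set t : ℕ := d u' - d u - 1 with ht
    have htle : t ≤ d u' := by omega
    set w : V := f^[t] u' with hw
    obtain ⟨hew, hdw⟩ := hiter t u' htle
    rw [← hw] at hew hdw
    have hwnO : w ∉ O := by
      intro h; rw [(hd0 w).mpr h] at hdw; omega
    have hfw : f w = u := by
      have : f^[1] w = u := hreach 1 w u (by omega) (by rw [hew, heu])
      simpa using this
    have h1 : le w v := hinf w hwnO v (by rw [hfw]; exact ha.symm)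
    have h2 : le u' w := hle_it t u' htle
    -- z = predecessor chain point of v at height d v' + 1, f z = v'
    have hdv : d v' < d v := by omega
    set s : ℕ := d v - d v' - 1 with hs
    have hsle : s ≤ d v := by omega
    set z : V := f^[s] v with hz
    obtain ⟨hez, hdz⟩ := hiter s v hsle
    rw [← hz] at hez hdz
    have hznO : z ∉ O := by
      intro h; rw [(hd0 z).mpr h] at hdz; omega
    have hfz : f z = v' := by
      have : f^[1] z = v' := hreach 1 z v' (by omega) (by rw [hez, hev])
      simpa using this
    have h3 : le z u' := hinf z hznO u' (by rw [hfz]; exact ha')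
    have h4 : le v z := hle_it s v hsle
    -- w ≤ v ≤ z ≤ u' ≤ w
    have h5 : le v w := htrans _ _ _ h4 (htrans _ _ _ h3 h2)
    have h6 : w = v := hantisymm _ _ h1 h5
    apply hne
    rw [← h6, hew, heu]
  -- Counting
  set OF : Finset V := O.toFinset with hOF
  set chain : V → Finset V := fun o => Finset.univ.filter fun v => e v = o with hchain
  set p : V → ℕ := fun o => (chain o).card with hp
  set A : Finset (V × V) := Finset.univ.filter fun q => G.Adj q.1 q.2 with hA
  have hmemOF : ∀ v, e v ∈ OF := by
    intro v; rw [hOF, Set.mem_toFinset]; exact heO v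
  have hpn : ∑ o ∈ OF, p o = Fintype.card V := by
    rw [hp]
    exact (Finset.card_eq_sum_card_fiberwise (f := e) (fun v _ => hmemOF v)).symm
  have hp1 : ∀ o ∈ OF, 1 ≤ p o := by
    intro o ho
    have hoO : o ∈ O := by rwa [hOF, Set.mem_toFinset] at ho
    have : o ∈ chain o := by
      rw [hchain]
      simp only [Finset.mem_filter, Finset.mem_univ, true_and]
      rw [he]
      simp [(hd0 o).mpr hoO]
    rw [hp]
    exact Finset.card_pos.mpr ⟨o, this⟩
  -- each chain has at least d v + 1 elements where e v = o
  have hdlt : ∀ v, d v + 1 ≤ p (e v) := by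
    intro v
    have : (Finset.range (d v + 1)).card ≤ (chain (e v)).card := by
      apply Finset.card_le_card_of_injOn (fun i => f^[i] v)
      · intro i hi
        rw [Finset.mem_coe, Finset.mem_range] at hi
        rw [hchain]
        simp only [Finset.mem_coe, Finset.mem_filter, Finset.mem_univ, true_and]
        exact (hiter i v (by omega)).1
      · intro i hi j hj hij
        simp only [Finset.coe_range, Set.mem_Iio] at hi hj
        have h1 := (hiter i v (by omega)).2
        have h2 := (hiter j v (by omega)).2
        have hij' : f^[i] v = f^[j] v := hij
        rw [hij'] at h1
        omega
    simpa using this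
  have hfib : ∀ q ∈ OF ×ˢ OF,
      (A.filter fun x => (e x.1, e x.2) = q).card + (if q.1 = q.2 then 2 else 1)
        ≤ p q.1 + p q.2 := by
    rintro ⟨o, o'⟩ hq
    rw [Finset.mem_product] at hq
    obtain ⟨ho, ho'⟩ := hq
    by_cases hoo : o = o'
    · -- diagonal case
      subst hoo
      have hoO : o ∈ O := by rwa [hOF, Set.mem_toFinset] at ho
      have hite : (if ((o, o) : V × V).1 = ((o, o) : V × V).2 then 2 else 1) = 2 :=
        if_pos rfl
      rw [hite]
      have hbound : (A.filter fun x => (e x.1, e x.2) = (o, o)).card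
          ≤ ((chain o).erase o ×ˢ (Finset.univ : Finset Bool)).card := by
        apply Finset.card_le_card_of_injOn
          (fun x => if d x.2 < d x.1 then (x.1, true) else (x.2, false))
        · intro x hx
          simp only [Finset.mem_coe, hA, Finset.mem_filter, Finset.mem_univ, true_and, Prod.mk.injEq] at hx ⊢
          obtain ⟨hxadj, hx1, hx2⟩ := hx
          have hne12 : d x.1 ≠ d x.2 := by
            intro h
            exact hxadj.ne (hinj (d x.1) x.1 x.2 rfl (by rw [hx1, hx2]) h.symm)
          by_cases hcase : d x.2 < d x.1
          · rw [if_pos hcase, Finset.mem_product]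
            constructor
            · apply Finset.mem_erase.mpr
              constructor
              · show x.1 ≠ o
                intro h
                have : d x.1 = 0 := (hd0 x.1).mpr (h ▸ hoO)
                omega
              · show x.1 ∈ chain o
                rw [hchain]
                simp only [Finset.mem_filter, Finset.mem_univ, true_and]
                exact hx1
            · exact Finset.mem_univ _
          · rw [if_neg hcase, Finset.mem_product]
            constructor
            · apply Finset.mem_erase.mpr
              constructor
              · show x.2 ≠ o
                intro h
                have : d x.2 = 0 := (hd0 x.2).mpr (h ▸ hoO)
                omega
              · show x.2 ∈ chain o
                rw [hchain]
                simp only [Finset.mem_filter, Finset.mem_univ, true_and]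
                exact hx2
            · exact Finset.mem_univ _
        · intro x hx y hy hxy
          simp only [Finset.mem_coe, hA, Finset.mem_filter, Finset.mem_univ, true_and,
            Prod.mk.injEq] at hx hy
          obtain ⟨hxadj, hx1, hx2⟩ := hx
          obtain ⟨hyadj, hy1, hy2⟩ := hy
          have hnex : d x.1 ≠ d x.2 := by
            intro h
            exact hxadj.ne (hinj (d x.1) x.1 x.2 rfl (by rw [hx1, hx2]) h.symm)
          have hney : d y.1 ≠ d y.2 := by
            intro h
            exact hyadj.ne (hinj (d y.1) y.1 y.2 rfl (by rw [hy1, hy2]) h.symm)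
          by_cases hcx : d x.2 < d x.1 <;> by_cases hcy : d y.2 < d y.1 <;>
            simp only [if_pos, if_neg, hcx, hcy, if_true, if_false, Prod.mk.injEq] at hxy
          · -- both true
            obtain ⟨h1, _⟩ := hxy
            have h2 : f x.1 = x.2 := hconsec x.1 x.2 hxadj (by rw [hx1, hx2]) hcx
            have h3 : f y.1 = y.2 := hconsec y.1 y.2 hyadj (by rw [hy1, hy2]) hcy
            have : x.2 = y.2 := by rw [← h2, ← h3, h1]
            exact Prod.ext h1 this
          · exact absurd hxy.2 (by simp)
          · exact absurd hxy.2 (by simp)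
          · obtain ⟨h1, _⟩ := hxy
            have h2 : f x.2 = x.1 := hconsec x.2 x.1 hxadj.symm (by rw [hx1, hx2]) (by omega)
            have h3 : f y.2 = y.1 := hconsec y.2 y.1 hyadj.symm (by rw [hy1, hy2]) (by omega)
            have : x.1 = y.1 := by rw [← h2, ← h3, h1]
            exact Prod.ext this h1
      have hmemo : o ∈ chain o := by
        rw [hchain]
        simp only [Finset.mem_filter, Finset.mem_univ, true_and]
        show f^[d o] o = o
        simp [(hd0 o).mpr hoO]
      rw [Finset.card_product, Finset.card_erase_of_mem hmemo, Finset.card_univ,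
        Fintype.card_bool] at hbound
      have hp1' := hp1 o ho
      have hpo : p o = (chain o).card := rfl
      have hq1 : p ((o, o) : V × V).1 = (chain o).card := rfl
      have hq2 : p ((o, o) : V × V).2 = (chain o).card := rfl
      omega
    · -- off-diagonal case
      have hbound : (A.filter fun x => (e x.1, e x.2) = (o, o')).card
          ≤ (Finset.range (p o + p o' - 1)).card := by
        apply Finset.card_le_card_of_injOn (fun x => d x.1 + d x.2)
        · intro x hx
          simp only [Finset.mem_coe, hA, Finset.mem_filter, Finset.mem_univ, true_and, Prod.mk.injEq] at hx ⊢
          obtain ⟨hxadj, hx1, hx2⟩ := hx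
          have h1 := hdlt x.1
          have h2 := hdlt x.2
          rw [hx1] at h1
          rw [hx2] at h2
          rw [Finset.mem_range]
          omega
        · intro x hx y hy hxy
          simp only [Finset.mem_coe, hA, Finset.mem_filter, Finset.mem_univ, true_and,
            Prod.mk.injEq] at hx hy
          obtain ⟨hxadj, hx1, hx2⟩ := hx
          obtain ⟨hyadj, hy1, hy2⟩ := hy
          have hnechain : e x.1 ≠ e x.2 := by rw [hx1, hx2]; exact hoo
          simp only at hxy
          rcases lt_trichotomy (d x.1) (d y.1) with h | h | h
          · exact absurd (hcross x.1 x.2 y.1 y.2 hxadj hyadj (by rw [hx1, hy1])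
              (by rw [hx2, hy2]) hnechain h hxy) (by simp)
          · have he1 : x.1 = y.1 := hinj (d x.1) x.1 y.1 rfl (by rw [hx1, hy1]) h.symm
            have he2 : x.2 = y.2 := hinj (d x.2) x.2 y.2 rfl (by rw [hx2, hy2]) (by omega)
            exact Prod.ext he1 he2
          · exact absurd (hcross y.1 y.2 x.1 x.2 hyadj hxadj (by rw [hx1, hy1])
              (by rw [hx2, hy2]) (by rw [hy1, hy2]; exact hoo) h hxy.symm) (by simp)
      rw [Finset.card_range] at hbound
      have h1 := hp1 o ho
      have h2 := hp1 o' ho'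
      have hne' : (o, o').1 ≠ (o, o').2 := hoo
      rw [if_neg hne']
      have hq1 : p ((o, o') : V × V).1 = p o := rfl
      have hq2 : p ((o, o') : V × V).2 = p o' := rfl
      omega
  -- sum it up
  have hAcard : A.card = ∑ q ∈ OF ×ˢ OF, (A.filter fun x => (e x.1, e x.2) = q).card := by
    apply Finset.card_eq_sum_card_fiberwise
    intro x _
    rw [Finset.mem_coe, Finset.mem_product]
    exact ⟨hmemOF _, hmemOF _⟩
  set k : ℕ := OF.card with hk
  have hsum1 : ∑ q ∈ OF ×ˢ OF, (p q.1 + p q.2) = 2 * (k * Fintype.card V) := by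
    rw [Finset.sum_product]
    have : ∀ o ∈ OF, ∑ o' ∈ OF, (p o + p o') = k * p o + Fintype.card V := by
      intro o _
      rw [Finset.sum_add_distrib, Finset.sum_const, smul_eq_mul, hpn, hk]
    rw [Finset.sum_congr rfl this, Finset.sum_add_distrib, ← Finset.mul_sum, hpn,
      Finset.sum_const, smul_eq_mul, ← hk]
    ring
  have hsum2 : ∑ q ∈ OF ×ˢ OF, (if q.1 = q.2 then 2 else 1) = k * k + k := by
    rw [Finset.sum_product]
    have : ∀ o ∈ OF, (∑ o' ∈ OF, if o = o' then 2 else 1) = k + 1 := by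
      intro o ho
      have : (∑ o' ∈ OF, if o = o' then 2 else 1)
          = ∑ o' ∈ OF, ((if o = o' then 1 else 0) + 1) := by
        apply Finset.sum_congr rfl
        intro o' _
        by_cases h : o = o' <;> simp [h]
      rw [this, Finset.sum_add_distrib, Finset.sum_ite_eq OF o (fun _ => 1), if_pos ho,
        Finset.sum_const, smul_eq_mul, mul_one, hk]
      omega
    rw [Finset.sum_congr rfl this, Finset.sum_const, smul_eq_mul, hk]
    ring
  have hmain : A.card + (k * k + k) ≤ 2 * (k * Fintype.card V) := by
    rw [hAcard, ← hsum2, ← hsum1, ← Finset.sum_add_distrib]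
    exact Finset.sum_le_sum hfib
  -- relate A.card to edge count
  have hA2 : 2 * G.edgeFinset.card = A.card := by
    rw [hA]
    exact SimpleGraph.two_mul_card_edgeFinset G
  have hksq : k * k + k = k * (k + 1) := by ring
  have hEcard : G.edgeSet.ncard = G.edgeFinset.card := by
    rw [← SimpleGraph.coe_edgeFinset, Set.ncard_coe_finset]
  have hOcard : O.ncard = k := by
    rw [hk, hOF, Set.ncard_eq_toFinset_card']
  rw [hEcard, hOcard]
  obtain ⟨c, hc⟩ := Nat.even_mul_succ_self k
  have hc' : k * (k + 1) = c + c := hc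
  set K : ℕ := k * Fintype.card V with hK
  omega
end

section
/- The influencing digraph D(G(n₁,…,n_k), P₁, …, P_k) of the extremal construction is acyclic. -/
/-- Vertices of the extremal construction `G(n₁,…,n_k)`:
`v_{i,a}` with `1 ≤ a ≤ nᵢ`, encoded as pairs `(i, a)`. -/
def CVert (k : ℕ) (n : Fin k → ℕ) : Type :=
  {p : Fin k × ℕ // 1 ≤ p.2 ∧ p.2 ≤ n p.1}

/-- The defining relation of the extremal construction: path edges
`v_{i,a} v_{i,a+1}`, and for `i < j` the connecting edges of types
(i) `v_{i,a} v_{j,a}` (`1 ≤ a < nᵢ`), (ii) `v_{i,a+1} v_{j,a}` (`1 ≤ a < nᵢ`),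
(iii) `v_{i,nᵢ} v_{j,a}` (`nᵢ ≤ a ≤ nⱼ`). -/
def CRel (k : ℕ) (n : Fin k → ℕ) (x y : CVert k n) : Prop :=
  (x.val.1 = y.val.1 ∧ y.val.2 = x.val.2 + 1)
  ∨ (x.val.1 < y.val.1 ∧ x.val.2 = y.val.2 ∧ x.val.2 < n x.val.1)
  ∨ (x.val.1 < y.val.1 ∧ x.val.2 = y.val.2 + 1 ∧ y.val.2 < n x.val.1)
  ∨ (x.val.1 < y.val.1 ∧ x.val.2 = n x.val.1 ∧ n x.val.1 ≤ y.val.2)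

/-- The graph `G(n₁,…,n_k)` of the extremal construction. -/
def CGraph (k : ℕ) (n : Fin k → ℕ) : SimpleGraph (CVert k n) :=
  SimpleGraph.fromRel (CRel k n)

/-- The successor `f(v_{i,a}) = v_{i,a+1}` along the path `Pᵢ`,
defined for `a < nᵢ`. -/
def CSucc (k : ℕ) (n : Fin k → ℕ) (x : CVert k n)
    (h : x.val.2 < n x.val.1) : CVert k n :=
  ⟨(x.val.1, x.val.2 + 1), ⟨Nat.succ_le_succ (Nat.zero_le _), h⟩⟩

/-- Arcs of the influencing digraph `D(G(n₁,…,n_k), P₁, …, P_k)`: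
`x → y` iff `y = f(x)`, or `y ≠ x` and `y` is adjacent to `f(x)`. -/
def CArc (k : ℕ) (n : Fin k → ℕ) (x y : CVert k n) : Prop :=
  ∃ h : x.val.2 < n x.val.1,
    y = CSucc k n x h ∨ ((CGraph k n).Adj y (CSucc k n x h) ∧ y ≠ x)

/-- Lexicographic order on the pairs `(a, i)`. -/
def CLt (k : ℕ) (n : Fin k → ℕ) (x y : CVert k n) : Prop :=
  x.val.2 < y.val.2 ∨ (x.val.2 = y.val.2 ∧ x.val.1 < y.val.1)

lemma CLt_trans {k n} {x y z : CVert k n} (h1 : CLt k n x y) (h2 : CLt k n y z) :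
    CLt k n x z := by
  rcases h1 with h1 | ⟨h1, h1'⟩ <;> rcases h2 with h2 | ⟨h2, h2'⟩
  · exact Or.inl (h1.trans h2)
  · exact Or.inl (h2 ▸ h1)
  · exact Or.inl (h1 ▸ h2)
  · exact Or.inr ⟨h1.trans h2, h1'.trans h2'⟩

/-- Key lemma: every arc `x → y` of the digraph with `y` non-final strictly
increases the pair `(a, i)` lexicographically. -/
lemma arc_lex {k n} {x y : CVert k n} (ha : CArc k n x y)
    (hy : y.val.2 < n y.val.1) : CLt k n x y := by
  obtain ⟨h, hc⟩ := ha
  rcases hc with rfl | ⟨hadj, hne⟩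
  · exact Or.inl (Nat.lt_succ_self _)
  · obtain ⟨hne2, hrel⟩ := hadj
    set z := CSucc k n x h with hz
    have hz1 : z.val.1 = x.val.1 := rfl
    have hz2 : z.val.2 = x.val.2 + 1 := rfl
    rcases hrel with hr | hr <;>
      rcases hr with ⟨e1, e2⟩ | ⟨e1, e2, e3⟩ | ⟨e1, e2, e3⟩ | ⟨e1, e2, e3⟩
    · exfalso; apply hne
      have : y.val.2 = x.val.2 := by rw [hz2] at e2; omega
      exact Subtype.ext (Prod.ext (by rw [← hz1, ← e1]) this)
    · exact Or.inl (by rw [hz2] at e2; omega)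
    · exact Or.inl (by rw [hz2] at e2; omega)
    · exact absurd (e2 ▸ hy) (lt_irrefl _)
    · exact Or.inl (by rw [hz2] at e2; omega)
    · exact Or.inl (by rw [hz2] at e2; omega)
    · exact Or.inr ⟨by rw [hz2] at e2; omega, hz1 ▸ e1⟩
    · exact Or.inl (by rw [hz2] at e2; omega)

/-- The influencing digraph `D(G(n₁,…,n_k), P₁, …, P_k)` of the extremal
construction is acyclic. -/
theorem extremal_construction_acyclic (k : ℕ) (n : Fin k → ℕ)
    (hpos : ∀ i, 1 ≤ n i) (hmono : ∀ i j : Fin k, i ≤ j → n i ≤ n j) :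
    ∀ x : CVert k n, ¬ Relation.TransGen (CArc k n) x x := by
  intro x hxx
  have key : ∀ y : CVert k n, Relation.TransGen (CArc k n) x y →
      y.val.2 < n y.val.1 → CLt k n x y := by
    intro y hy
    induction hy with
    | single h => exact fun hfy => arc_lex h hfy
    | tail hxb hby ih =>
      intro hfy
      obtain ⟨hb, _⟩ := id hby
      exact CLt_trans (ih hb) (arc_lex hby hfy)
  obtain ⟨c, hc, _⟩ := Relation.TransGen.head'_iff.mp hxx
  obtain ⟨hx, _⟩ := hc
  have := key x hxx hx
  rcases this with h | ⟨_, h⟩ <;> exact absurd h (lt_irrefl _)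
end

section
/- The geometry (G, I, O) with G = G(n₁,…,n_k), I = {v_{i,1} : 1 ≤ i ≤ k}, and O = {v_{i,nᵢ} : 1 ≤ i ≤ k} has a causal flow, with flow function f(v_{i,a}) = v_{i,a+1}. -/
def cw (k : ℕ) (n : Fin k → ℕ) (M : ℕ) (x : CVert k n) : ℕ :=
  if x.val.2 = n x.val.1 then M else 2 * x.val.2

def crho (k : ℕ) (n : Fin k → ℕ) (M : ℕ) (x : CVert k n) : ℕ :=
  (k + 1) * cw k n M x + x.val.1.val

lemma lex_lt (k w1 w2 i1 i2 : ℕ) (hi : i1 ≤ k)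
    (h : w1 < w2 ∨ (w1 = w2 ∧ i1 < i2)) :
    (k + 1) * w1 + i1 < (k + 1) * w2 + i2 := by
  rcases h with h | ⟨rfl, h⟩
  · have h1 : w1 + 1 ≤ w2 := h
    have h2 := Nat.mul_le_mul_left (k + 1) h1
    have h3 : (k + 1) * (w1 + 1) = (k + 1) * w1 + (k + 1) := by ring
    omega
  · omega

lemma main_lt (k : ℕ) (n : Fin k → ℕ) (M : ℕ)
    (hmono : ∀ i j : Fin k, i ≤ j → n i ≤ n j)
    (hM : ∀ i : Fin k, 2 * n i + 2 ≤ M)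
    (x y : CVert k n) (h : x.val.2 < n x.val.1)
    (hadj : (CGraph k n).Adj y (CSucc k n x h)) (hne : y ≠ x) :
    crho k n M x < crho k n M y := by
  obtain ⟨⟨i, a⟩, ha1, ha2⟩ := x
  obtain ⟨⟨j, b⟩, hb1, hb2⟩ := y
  simp only at h
  have hMi := hM i
  have hMj := hM j
  have hik : i.val < k := i.isLt
  have hjk : j.val < k := j.isLt
  have hwx : crho k n M ⟨(i, a), ha1, ha2⟩
      = (k + 1) * (if a = n i then M else 2 * a) + i.val := rfl
  have hwy : crho k n M ⟨(j, b), hb1, hb2⟩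
      = (k + 1) * (if b = n j then M else 2 * b) + j.val := rfl
  rw [hwx, hwy, if_neg (by omega : ¬ a = n i)]
  replace hadj := (SimpleGraph.fromRel_adj (CRel k n) _ _).mp hadj
  simp only [CRel, CSucc] at hadj
  obtain ⟨hne', hrel | hrel⟩ := hadj
  · rcases hrel with ⟨hji, hba⟩ | ⟨hji, hba, hbn⟩ | ⟨hji, hba, hbn⟩ | ⟨hji, hba, hbn⟩
    · exact absurd (Subtype.ext (Prod.ext hji (by omega : b = a))) hne
    · -- j < i, b = a + 1, b < n j
      rw [if_neg (by omega : ¬ b = n j)]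
      exact lex_lt _ _ _ _ _ (by omega) (Or.inl (by omega))
    · -- j < i, b = a + 2, a + 1 < n j
      split_ifs with hb
      · exact lex_lt _ _ _ _ _ (by omega) (Or.inl (by omega))
      · exact lex_lt _ _ _ _ _ (by omega) (Or.inl (by omega))
    · -- j < i, b = n j, n j ≤ a + 1
      rw [if_pos hba]
      exact lex_lt _ _ _ _ _ (by omega) (Or.inl (by omega))
  · rcases hrel with ⟨hji, hba⟩ | ⟨hji, hba, hbn⟩ | ⟨hji, hba, hbn⟩ | ⟨hji, hba, hbn⟩
    · -- i = j, b = a + 2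
      split_ifs with hb
      · exact lex_lt _ _ _ _ _ (by omega) (Or.inl (by omega))
      · exact lex_lt _ _ _ _ _ (by omega) (Or.inl (by omega))
    · -- i < j, a + 1 = b, a + 1 < n i
      have hnij : n i ≤ n j := hmono i j (le_of_lt hji)
      rw [if_neg (by omega : ¬ b = n j)]
      exact lex_lt _ _ _ _ _ (by omega) (Or.inl (by omega))
    · -- i < j, a + 1 = b + 1, b < n i
      have hnij : n i ≤ n j := hmono i j (le_of_lt hji)
      rw [if_neg (by omega : ¬ b = n j)]
      exact lex_lt _ _ _ _ _ (by omega) (Or.inr ⟨by omega, hji⟩)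
    · -- i < j, a + 1 = n i, n i ≤ b
      split_ifs with hb
      · exact lex_lt _ _ _ _ _ (by omega) (Or.inl (by omega))
      · exact lex_lt _ _ _ _ _ (by omega) (Or.inl (by omega))
/-- The geometry `(G(n₁,…,n_k), I, O)` has a causal flow. -/
theorem extremal_construction_has_flow (k : ℕ) (n : Fin k → ℕ)
    (hpos : ∀ i, 1 ≤ n i) (hmono : ∀ i j : Fin k, i ≤ j → n i ≤ n j) :
    ∃ le : CVert k n → CVert k n → Prop,
      (∀ x, le x x)
      ∧ (∀ x y z, le x y → le y z → le x z)
      ∧ (∀ x y, le x y → le y x → x = y)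
      ∧ ∀ (x : CVert k n) (h : x.val.2 < n x.val.1),
          (CSucc k n x h).val.2 ≠ 1
          ∧ (CGraph k n).Adj x (CSucc k n x h)
          ∧ le x (CSucc k n x h)
          ∧ ∀ y, (CGraph k n).Adj y (CSucc k n x h) → le x y := by
  set M : ℕ := 2 * Finset.univ.sup n + 2 with hMdef
  have hM : ∀ i : Fin k, 2 * n i + 2 ≤ M := by
    intro i
    have := Finset.le_sup (f := n) (Finset.mem_univ i)
    omega
  refine ⟨fun x y => x = y ∨ crho k n M x < crho k n M y, fun x => Or.inl rfl,
    ?_, ?_, ?_⟩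
  · rintro x y z (rfl | h1) h2
    · exact h2
    · rcases h2 with rfl | h2
      · exact Or.inr h1
      · exact Or.inr (lt_trans h1 h2)
  · rintro x y (rfl | h1) h2
    · rfl
    · rcases h2 with rfl | h2
      · rfl
      · exact absurd (lt_trans h1 h2) (lt_irrefl _)
  · intro x h
    have hsucc_adj : (CGraph k n).Adj x (CSucc k n x h) := by
      rw [CGraph, SimpleGraph.fromRel_adj]
      constructor
      · intro hx
        have := congrArg (fun z => z.val.2) hx
        simp [CSucc] at this
      · exact Or.inl (Or.inl ⟨rfl, rfl⟩)
    have hlt : crho k n M x < crho k n M (CSucc k n x h) := by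
      have hwx : crho k n M x
          = (k + 1) * (if x.val.2 = n x.val.1 then M else 2 * x.val.2)
            + x.val.1.val := rfl
      have hwy : crho k n M (CSucc k n x h)
          = (k + 1) * (if x.val.2 + 1 = n x.val.1 then M else 2 * (x.val.2 + 1))
            + x.val.1.val := rfl
      have hMx := hM x.val.1
      rw [hwx, hwy, if_neg (by omega : ¬ x.val.2 = n x.val.1)]
      split_ifs with hb
      · exact lex_lt _ _ _ _ _ (le_of_lt x.val.1.isLt) (Or.inl (by omega))
      · exact lex_lt _ _ _ _ _ (le_of_lt x.val.1.isLt) (Or.inl (by omega))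
    refine ⟨?_, hsucc_adj, Or.inr hlt, ?_⟩
    · have := x.prop.1
      simp only [CSucc]
      omega
    · intro y hy
      by_cases hxy : y = x
      · exact Or.inl hxy.symm
      · exact Or.inr (main_lt k n M hmono hM x y h hy hxy)
end

section
/- For every n ≥ k ≥ 1, there exists a geometry (G, I, O) with |V(G)| = n, |I| = |O| = k, having a causal flow, and with |E(G)| = kn − k(k+1)/2. Hence the extremal bound kn − (k+1 choose 2) is tight. -/
def bandGraph (n k : ℕ) : SimpleGraph (Fin n) where
  Adj a b := a ≠ b ∧ b.val ≤ a.val + k ∧ a.val ≤ b.val + k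
  symm := by constructor; intro a b h; exact ⟨h.1.symm, h.2.2, h.2.1⟩
  loopless := by constructor; intro a h; exact h.1 rfl

instance (n k : ℕ) : DecidableRel (bandGraph n k).Adj := fun a b =>
  decidable_of_iff (a ≠ b ∧ b.val ≤ a.val + k ∧ a.val ≤ b.val + k) Iff.rfl

lemma bandGraph_adj {n k : ℕ} {a b : Fin n} :
    (bandGraph n k).Adj a b ↔ a ≠ b ∧ b.val ≤ a.val + k ∧ a.val ≤ b.val + k := Iff.rfl

lemma sum_Icc_id (k : ℕ) : ∑ d ∈ Finset.Icc 1 k, d = k * (k + 1) / 2 := by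
  induction k with
  | zero => simp
  | succ m ih =>
      rw [Finset.sum_Icc_succ_top (by omega), ih]
      obtain ⟨c, hc⟩ := Nat.even_mul_succ_self m
      have hx : (m + 1) * (m + 1 + 1) = m * (m + 1) + 2 * (m + 1) := by ring
      omega

lemma bandGraph_count (n k : ℕ) (hk : 1 ≤ k) (hkn : k ≤ n) :
    (bandGraph n k).edgeFinset.card = k * n - k * (k + 1) / 2 := by
  have hn : 0 < n := lt_of_lt_of_le hk hkn
  set emb : ℕ → Fin n := fun a => ⟨a % n, Nat.mod_lt _ hn⟩ with hemb
  have embval : ∀ a, a < n → (emb a).val = a := fun a ha => Nat.mod_eq_of_lt ha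
  have key : ((Finset.Icc 1 k).sigma fun d => Finset.range (n - d)).card
      = (bandGraph n k).edgeFinset.card := by
    refine Finset.card_bij (fun p _ => s(emb p.2, emb (p.2 + p.1))) ?_ ?_ ?_
    · rintro ⟨d, a⟩ hp
      simp only [Finset.mem_sigma, Finset.mem_Icc, Finset.mem_range] at hp
      obtain ⟨⟨hd1, hdk⟩, ha⟩ := hp
      have h1 : a < n := by omega
      have h2 : a + d < n := by omega
      rw [SimpleGraph.mem_edgeFinset, SimpleGraph.mem_edgeSet]
      refine ⟨?_, ?_, ?_⟩
      · intro h; apply_fun Fin.val at h; rw [embval _ h1, embval _ h2] at h; omega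
      · rw [embval _ h1, embval _ h2]; omega
      · rw [embval _ h1, embval _ h2]; omega
    · rintro ⟨d1, a1⟩ hp1 ⟨d2, a2⟩ hp2 heq
      simp only [Finset.mem_sigma, Finset.mem_Icc, Finset.mem_range] at hp1 hp2
      have h11 : a1 < n := by omega
      have h12 : a1 + d1 < n := by omega
      have h21 : a2 < n := by omega
      have h22 : a2 + d2 < n := by omega
      rw [Sym2.eq_iff] at heq
      rcases heq with ⟨h, h'⟩ | ⟨h, h'⟩
      · apply_fun Fin.val at h h'
        rw [embval _ h11, embval _ h21] at h
        rw [embval _ h12, embval _ h22] at h'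
        have e1 : d1 = d2 := by omega
        subst e1
        have e2 : a1 = a2 := by omega
        subst e2
        rfl
      · apply_fun Fin.val at h h'
        rw [embval _ h11, embval _ h22] at h
        rw [embval _ h12, embval _ h21] at h'
        have e1 : d1 = d2 := by omega
        subst e1
        have e2 : a1 = a2 := by omega
        subst e2
        rfl
    · intro e he
      induction e using Sym2.ind with
      | _ x y =>
        rw [SimpleGraph.mem_edgeFinset, SimpleGraph.mem_edgeSet, bandGraph_adj] at he
        obtain ⟨hne, hb1, hb2⟩ := he
        have hxy : x.val ≠ y.val := fun h => hne (Fin.ext h)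
        rcases Nat.lt_or_ge x.val y.val with hlt | hge
        · refine ⟨⟨y.val - x.val, x.val⟩, ?_, ?_⟩
          · simp only [Finset.mem_sigma, Finset.mem_Icc, Finset.mem_range]
            have := y.isLt
            omega
          · have h1 : x.val < n := x.isLt
            have h2 : x.val + (y.val - x.val) = y.val := by omega
            dsimp only
            rw [h2]
            have ex : emb ↑x = x := Fin.ext (embval _ h1)
            have ey : emb ↑y = y := Fin.ext (embval _ y.isLt)
            rw [ex, ey]
        · have hlt : y.val < x.val := by omega
          refine ⟨⟨x.val - y.val, y.val⟩, ?_, ?_⟩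
          · simp only [Finset.mem_sigma, Finset.mem_Icc, Finset.mem_range]
            have := x.isLt
            omega
          · have h2 : y.val + (x.val - y.val) = x.val := by omega
            dsimp only
            rw [h2, Sym2.eq_swap]
            have ex : emb ↑x = x := Fin.ext (embval _ x.isLt)
            have ey : emb ↑y = y := Fin.ext (embval _ y.isLt)
            rw [ex, ey]
  rw [← key, Finset.card_sigma]
  simp only [Finset.card_range]
  have h1 : ∑ d ∈ Finset.Icc 1 k, (n - d) + ∑ d ∈ Finset.Icc 1 k, d
      = k * n := by
    rw [← Finset.sum_add_distrib]
    have : ∀ d ∈ Finset.Icc 1 k, n - d + d = n := by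
      intro d hd
      simp only [Finset.mem_Icc] at hd
      omega
    rw [Finset.sum_congr rfl this, Finset.sum_const, Nat.card_Icc]
    simp [Nat.mul_comm]
  have h2 := sum_Icc_id k
  omega

/-- For every `n ≥ k ≥ 1` there is a geometry `(G, I, O)` on `n` vertices with
`|I| = |O| = k` having a causal flow and `|E(G)| = kn − k(k+1)/2`: the extremal
bound `kn − (k+1 choose 2)` is tight. -/
theorem extremal_bound_tight (n k : ℕ) (hk : 1 ≤ k) (hkn : k ≤ n) :
    ∃ (V : Type) (_ : Fintype V) (G : SimpleGraph V) (I O : Set V)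
      (f : V → V) (le : V → V → Prop),
      Fintype.card V = n ∧ I.ncard = k ∧ O.ncard = k
      ∧ (∀ x, le x x)
      ∧ (∀ x y z, le x y → le y z → le x z)
      ∧ (∀ x y, le x y → le y x → x = y)
      ∧ (∀ x ∉ O, f x ∉ I ∧ G.Adj x (f x) ∧ le x (f x)
          ∧ ∀ y, G.Adj y (f x) → le x y)
      ∧ G.edgeSet.ncard = k * n - k * (k + 1) / 2 := by
  have hn : 0 < n := lt_of_lt_of_le hk hkn
  refine ⟨Fin n, inferInstance, bandGraph n k,
    Set.range (fun i : Fin k => (⟨i.val, lt_of_lt_of_le i.isLt hkn⟩ : Fin n)),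
    Set.range (fun i : Fin k => (⟨n - k + i.val, by omega⟩ : Fin n)),
    fun v => if h : v.val + k < n then ⟨v.val + k, h⟩ else v,
    fun a b => a.val ≤ b.val, ?_, ?_, ?_, ?_, ?_, ?_, ?_, ?_⟩
  · exact Fintype.card_fin n
  · rw [← Set.image_univ, Set.ncard_image_of_injective _ ?_, Set.ncard_univ,
      Nat.card_eq_fintype_card, Fintype.card_fin]
    intro a b h
    apply_fun Fin.val at h
    exact Fin.ext h
  · rw [← Set.image_univ, Set.ncard_image_of_injective _ ?_, Set.ncard_univ,
      Nat.card_eq_fintype_card, Fintype.card_fin]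
    intro a b h
    apply_fun Fin.val at h
    simp only at h
    apply Fin.ext
    omega
  · intro x; exact le_refl _
  · intro x y z h1 h2; exact le_trans h1 h2
  · intro x y h1 h2; exact Fin.ext (le_antisymm h1 h2)
  · intro x hx
    have hxv : x.val < n - k := by
      by_contra h
      push_neg at h
      have hxlt := x.isLt
      exact hx ⟨⟨x.val - (n - k), by omega⟩, Fin.ext (by simp only; omega)⟩
    have hlt : x.val + k < n := by omega
    simp only [dif_pos hlt]
    refine ⟨?_, ⟨?_, ?_, ?_⟩, ?_, ?_⟩
    · rintro ⟨i, hi⟩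
      apply_fun Fin.val at hi
      simp only at hi
      omega
    · intro h
      apply_fun Fin.val at h
      simp only at h
      omega
    · simp
    · simp; omega
    · simp
    · intro y hy
      rw [bandGraph_adj] at hy
      simp only at hy
      omega
  · rw [← SimpleGraph.coe_edgeFinset, Set.ncard_coe_finset]
    exact bandGraph_count n k hk hkn
end

section
/- Let (f, ≼) be a causal flow on a geometry (G, I, O) and let ≼_f denote the natural pre-order for f (the reflexive-transitive closure of the relations x ≼_f f(x) and x ≼_f y whenever y ~ f(x), for x ∈ V(G)\O). Then ≼_f is contained in ≼ (i.e., x ≼_f y implies x ≼ y), and consequently ≼_f is antisymmetric, so (f, ≼_f) is itself a causal flow. -/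
/-- Let `(f, ≼)` be a causal flow on a geometry `(G, I, O)` and let `≼_f` be
the natural pre-order for `f` (the reflexive-transitive closure of the
relations `x ≼_f f x` and `x ≼_f y` whenever `y ~ f x`, for `x ∈ V(G)\O`).
Then `≼_f` is contained in `≼`; consequently `≼_f` is antisymmetric, and
`(f, ≼_f)` is itself a causal flow. -/
theorem natural_preorder_of_causal_flow {V : Type*} [Fintype V]
    (G : SimpleGraph V) (I O : Set V) (f : V → V) (le : V → V → Prop)
    (hrefl : ∀ x, le x x)
    (htrans : ∀ x y z, le x y → le y z → le x z)
    (hantisymm : ∀ x y, le x y → le y x → x = y)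
    (hcod : ∀ x ∉ O, f x ∉ I)
    (hadj : ∀ x ∉ O, G.Adj x (f x))
    (hle : ∀ x ∉ O, le x (f x))
    (hinf : ∀ x ∉ O, ∀ y, G.Adj y (f x) → le x y) :
    (∀ x y, Relation.ReflTransGen
        (fun a b => a ∉ O ∧ (b = f a ∨ G.Adj b (f a))) x y → le x y)
    ∧ (∀ x y, Relation.ReflTransGen
          (fun a b => a ∉ O ∧ (b = f a ∨ G.Adj b (f a))) x y →
        Relation.ReflTransGen
          (fun a b => a ∉ O ∧ (b = f a ∨ G.Adj b (f a))) y x → x = y)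
    ∧ (∀ x ∉ O,
        Relation.ReflTransGen
          (fun a b => a ∉ O ∧ (b = f a ∨ G.Adj b (f a))) x (f x)
        ∧ ∀ y, G.Adj y (f x) →
            Relation.ReflTransGen
              (fun a b => a ∉ O ∧ (b = f a ∨ G.Adj b (f a))) x y) := by
  have main : ∀ x y, Relation.ReflTransGen
      (fun a b => a ∉ O ∧ (b = f a ∨ G.Adj b (f a))) x y → le x y := by
    intro x y h
    induction h with
    | refl => exact hrefl x
    | tail _ hstep ih =>
      rcases hstep with ⟨hb, hc⟩
      rcases hc with rfl | hadj'
      · exact htrans _ _ _ ih (hle _ hb)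
      · exact htrans _ _ _ ih (hinf _ hb _ hadj')
  refine ⟨main, fun x y h1 h2 => hantisymm x y (main x y h1) (main y x h2),
    fun x hx => ⟨Relation.ReflTransGen.single ⟨hx, Or.inl rfl⟩,
      fun y hy => Relation.ReflTransGen.single ⟨hx, Or.inr hy⟩⟩⟩
end
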